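/- Let u be an element of the commutator ideal F_n' of the free metabelian Lie algebra F_n. Then the inner automorphism ψ_u maps every symmetric element of F_n to a symmetric element (i.e., ψ_u(F_n^{S_n}) ⊆ F_n^{S_n}) if and only if u itself is symmetric, i.e., u ∈ (F_n')^{S_n}. -/

import Mathlib

set_option linter.unusedSectionVars false
set_option maxHeartbeats 1000000


noncomputable section

open LieAlgebra LieModule

variable (K : Type*) [Field K] [CharZero K] (n c : ℕ)

/-- The free Lie algebra `L_n` of rank `n` over `K`. -/
abbrev L := FreeLieAlgebra K (Fin n)

/-- The generators `x_1, …, x_n` of `L_n`. -/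
def X (i : Fin n) : L K n := FreeLieAlgebra.of K i

/-- The automorphic action of a permutation `π ∈ S_n` on `L_n`, permuting the generators. -/
def permMap (π : Equiv.Perm (Fin n)) : L K n →ₗ⁅K⁆ L K n :=
  FreeLieAlgebra.lift K (fun i => FreeLieAlgebra.of K (π i))

/-- The free metabelian Lie algebra `F_n = L_n / L_n''`. -/
abbrev F := L K n ⧸ (derivedSeries K (L K n) 2)

/-- The canonical projection `L_n → F_n`. -/
def Fmk : L K n → F K n := LieSubmodule.Quotient.mk

/-- The images `x_1, …, x_n` of the generators in `F_n`. -/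
def Fx (i : Fin n) : F K n := Fmk K n (X K n i)

/-- An element of `F_n` is symmetric if it is fixed by the induced action of every `π ∈ S_n`.
(The second derived ideal is invariant under the `S_n`-action, so the action descends.) -/
def FIsSymm (p : F K n) : Prop :=
  ∀ π : Equiv.Perm (Fin n), ∀ a : L K n, Fmk K n a = p → Fmk K n (permMap K n π a) = p

variable {K n}
def Fmk' : L K n →ₗ⁅K⁆ F K n :=
  { (derivedSeries K (L K n) 2).toSubmodule.mkQ with
    map_lie' := fun {_ _} => rfl }
lemma Fmk'_eq (a : L K n) : Fmk' a = Fmk K n a := rfl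
lemma Fmk_surj : Function.Surjective (Fmk K n) := Quot.mk_surjective
lemma permMap_comp (π σ : Equiv.Perm (Fin n)) (a : L K n) :
    permMap K n π (permMap K n σ a) = permMap K n (π * σ) a := by
  have : (permMap K n π).comp (permMap K n σ) = permMap K n (π * σ) := by
    apply FreeLieAlgebra.hom_ext; intro x; simp [permMap, FreeLieAlgebra.lift_of_apply]
  exact LieHom.congr_fun this a
lemma permMap_one (a : L K n) : permMap K n 1 a = a := by
  have : permMap K n 1 = LieHom.id (R := K) (L₁ := L K n) := by
    apply FreeLieAlgebra.hom_ext; intro x; simp [permMap, FreeLieAlgebra.lift_of_apply]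
  exact LieHom.congr_fun this a
lemma permMap_surj (π : Equiv.Perm (Fin n)) : Function.Surjective (permMap K n π) :=
  fun a => ⟨permMap K n π⁻¹ a, by rw [permMap_comp, mul_inv_cancel, permMap_one]⟩
lemma permMap_mem_derived {k : ℕ} (π : Equiv.Perm (Fin n)) {a : L K n}
    (h : a ∈ derivedSeries K (L K n) k) :
    permMap K n π a ∈ derivedSeries K (L K n) k := by
  rw [← LieIdeal.derivedSeries_map_eq k (permMap_surj π)]
  exact LieIdeal.mem_map h

-- new layer
lemma Fmk_eq_iff {a b : L K n} :
    Fmk K n a = Fmk K n b ↔ a - b ∈ derivedSeries K (L K n) 2 :=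
  Submodule.Quotient.eq _

lemma Fmk_eq_zero {a : L K n} : Fmk K n a = 0 ↔ a ∈ derivedSeries K (L K n) 2 :=
  Submodule.Quotient.mk_eq_zero _

lemma Fmk_congr_perm (π : Equiv.Perm (Fin n)) {a b : L K n} (h : Fmk K n a = Fmk K n b) :
    Fmk K n (permMap K n π a) = Fmk K n (permMap K n π b) := by
  rw [Fmk_eq_iff] at h ⊢
  rw [show permMap K n π a - permMap K n π b = permMap K n π (a-b) by rw [map_sub]]
  exact permMap_mem_derived π h

lemma fIsSymm_of_lift {a : L K n} (h : ∀ π, Fmk K n (permMap K n π a) = Fmk K n a) :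
    FIsSymm K n (Fmk K n a) := by
  intro π b hb
  rw [Fmk_congr_perm π hb, h π]

lemma Fmk_bracket (a b : L K n) : Fmk K n ⁅a, b⁆ = ⁅Fmk K n a, Fmk K n b⁆ := rfl

-- lift from derived series of F
lemma exists_lift_derived {z : F K n} (hz : z ∈ derivedSeries K (F K n) 1) :
    ∃ a ∈ derivedSeries K (L K n) 1, Fmk K n a = z := by
  rw [← LieIdeal.derivedSeries_map_eq 1 (f := Fmk') (Fmk_surj)] at hz
  obtain ⟨⟨a, ha⟩, h⟩ := LieIdeal.mem_map_of_surjective Fmk_surj hz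
  exact ⟨a, ha, h⟩

lemma derived_F_two : derivedSeries K (F K n) 2 = ⊥ := by
  rw [← LieIdeal.derivedSeries_map_eq 2 (f := Fmk') (Fmk_surj)]
  rw [LieIdeal.map_eq_bot_iff]
  intro x hx
  simp only [LieHom.mem_ker, Fmk'_eq, Fmk_eq_zero]
  exact hx

lemma lie_derived_eq_zero {z w : F K n} (hz : z ∈ derivedSeries K (F K n) 1)
    (hw : w ∈ derivedSeries K (F K n) 1) : ⁅z, w⁆ = 0 := by
  have : ⁅z, w⁆ ∈ derivedSeries K (F K n) 2 := by
    exact LieSubmodule.lie_mem_lie hz hw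
  rw [derived_F_two] at this
  simpa using this

lemma mem_derived_one (x y : F K n) : ⁅x, y⁆ ∈ derivedSeries K (F K n) 1 :=
  LieSubmodule.lie_mem_lie (LieSubmodule.mem_top x) (LieSubmodule.mem_top y)


attribute [local instance 100] LieRing.ofAssociativeRing

abbrev Q' (K : Type*) [Field K] (n : ℕ) := MvPolynomial (Fin n ⊕ Fin n) K
abbrev M' (K : Type*) [Field K] (n : ℕ) := Matrix (Fin 2) (Fin 2) (Q' K n)

def Tv (i : Fin n) : Q' K n := MvPolynomial.X (Sum.inl i)
def Yv (i : Fin n) : Q' K n := MvPolynomial.X (Sum.inr i)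
def Em (q : Q' K n) : M' K n := Matrix.single 0 1 q
def ξ (i : Fin n) : M' K n := Matrix.single 0 0 (Tv i) + Em (Yv i)

lemma Em_apply (q : Q' K n) (a b : Fin 2) :
    Em q a b = if a = 0 ∧ b = 1 then q else 0 := by
  fin_cases a <;> fin_cases b <;> simp [Em, Matrix.single]

lemma xi_apply (i : Fin n) (a b : Fin 2) :
    (ξ i : M' K n) a b = if a = 0 then (if b = 0 then Tv i else Yv i) else 0 := by
  fin_cases a <;> fin_cases b <;>
    simp [ξ, Em, Matrix.add_apply, Matrix.single]

lemma Em_add (q q' : Q' K n) : Em (q + q') = Em q + Em q' := Matrix.single_add _ _ _ _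
lemma Em_zero : (Em 0 : M' K n) = 0 := Matrix.single_zero _ _
lemma Em_sub (q q' : Q' K n) : Em (q - q') = Em q - Em q' := by
  ext a b; simp only [Em_apply, Matrix.sub_apply]; split <;> simp
lemma Em_neg (q : Q' K n) : Em (-q) = - Em q := by
  ext a b; simp only [Em_apply, Matrix.neg_apply]; split <;> simp
lemma Em_smul (c : K) (q : Q' K n) : Em (c • q) = c • Em q := by
  ext a b; simp only [Em_apply, Matrix.smul_apply]; split <;> simp
lemma Em_mul_Em (q q' : Q' K n) : Em q * Em q' = 0 := by
  ext a b
  rw [Matrix.mul_apply, Fin.sum_univ_two]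
  simp [Em_apply]
lemma Em_inj : Function.Injective (Em : Q' K n → M' K n) := by
  intro q q' h
  have := congrArg (fun A : M' K n => A 0 1) h
  simpa [Em_apply] using this

-- row condition subalgebra
def WS : LieSubalgebra K (M' K n) where
  carrier := {A | A 1 0 = 0 ∧ A 1 1 = 0}
  add_mem' := by rintro A B ⟨h1, h2⟩ ⟨h3, h4⟩; constructor <;>
    simp [Matrix.add_apply, h1, h2, h3, h4]
  zero_mem' := by simp
  smul_mem' := by rintro t A ⟨h1, h2⟩; constructor <;> simp [Matrix.smul_apply, h1, h2]
  lie_mem' := by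
    rintro A B ⟨h1, h2⟩ ⟨h3, h4⟩
    have mul10 : ∀ (C D : M' K n), C 1 0 = 0 → C 1 1 = 0 → (C * D) 1 0 = 0 ∧ (C * D) 1 1 = 0 := by
      intro C D hc hc'
      constructor <;> · rw [Matrix.mul_apply, Fin.sum_univ_two, hc, hc']; ring
    obtain ⟨e1, e2⟩ := mul10 A B h1 h2
    obtain ⟨e3, e4⟩ := mul10 B A h3 h4
    constructor <;> simp [Ring.lie_def, Matrix.sub_apply, e1, e2, e3, e4]

lemma Em_mem_WS (q : Q' K n) : Em q ∈ (WS : LieSubalgebra K (M' K n)) := by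
  constructor <;> simp [Em_apply]

lemma xi_mem_WS (i : Fin n) : ξ i ∈ (WS : LieSubalgebra K (M' K n)) := by
  constructor <;> simp [xi_apply]

lemma lie_WS {A B : M' K n} (hA : A ∈ (WS : LieSubalgebra K (M' K n)))
    (hB : B ∈ WS) : ⁅A, B⁆ = Em (A 0 0 * B 0 1 - B 0 0 * A 0 1) := by
  obtain ⟨h1, h2⟩ := hA
  obtain ⟨h3, h4⟩ := hB
  ext a b
  rw [Ring.lie_def]
  rw [Matrix.sub_apply, Matrix.mul_apply, Matrix.mul_apply, Fin.sum_univ_two, Fin.sum_univ_two,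
    Em_apply]
  fin_cases a <;> fin_cases b <;> simp [h1, h2, h3, h4] <;> ring

lemma lie_Em_xi (q : Q' K n) (k : Fin n) : ⁅Em q, ξ k⁆ = - Em (Tv k * q) := by
  rw [lie_WS (Em_mem_WS q) (xi_mem_WS k), ← Em_neg]
  congr 1
  simp [Em_apply, xi_apply]

lemma lie_xi_xi (i j : Fin n) : ⁅(ξ i : M' K n), ξ j⁆ = (Em (Tv i * Yv j - Tv j * Yv i) : M' K n) := by
  rw [lie_WS (xi_mem_WS i) (xi_mem_WS j)]
  congr 1
  simp [xi_apply]

def φ : L K n →ₗ⁅K⁆ M' K n := FreeLieAlgebra.lift K ξ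

lemma φ_X (i : Fin n) : φ (X K n i) = ξ i := by
  simp [φ, X, FreeLieAlgebra.lift_of_apply]

lemma φ_mem_WS (a : L K n) : φ a ∈ (WS : LieSubalgebra K (M' K n)) := by
  have hξ : ∀ i, ξ i ∈ (WS : LieSubalgebra K (M' K n)) := by
    intro i
    constructor <;> simp [ξ, Em, Matrix.add_apply, Matrix.single]
  let h : L K n →ₗ⁅K⁆ WS := FreeLieAlgebra.lift K (fun i => ⟨ξ i, hξ i⟩)
  have : (WS.incl).comp h = φ := by
    apply FreeLieAlgebra.hom_ext
    intro x
    simp [h, φ, FreeLieAlgebra.lift_of_apply]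
  rw [← this]
  exact (h a).2

lemma φ_derived_one {a : L K n} (ha : a ∈ derivedSeries K (L K n) 1) :
    ∃ q, φ a = Em q := by
  have h1 : derivedSeries K (L K n) 1 = ⁅(⊤ : LieIdeal K (L K n)), ⊤⁆ := rfl
  rw [h1] at ha
  have ha' : a ∈ Submodule.span K {m | ∃ x ∈ (⊤ : LieIdeal K (L K n)), ∃ y ∈ (⊤ : LieIdeal K (L K n)), ⁅x, y⁆ = m} := by
    rw [← LieSubmodule.lieIdeal_oper_eq_linear_span']
    exact ha
  clear ha
  induction ha' using Submodule.span_induction with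
  | mem m hm =>
    obtain ⟨x, -, y, -, rfl⟩ := hm
    exact ⟨_, by rw [LieHom.map_lie, lie_WS (φ_mem_WS x) (φ_mem_WS y)]⟩
  | zero => exact ⟨0, by rw [Em_zero, map_zero]⟩
  | add x y _ _ hx hy =>
    obtain ⟨q, hq⟩ := hx; obtain ⟨q', hq'⟩ := hy
    exact ⟨q + q', by rw [map_add, hq, hq', Em_add]⟩
  | smul t x _ hx =>
    obtain ⟨q, hq⟩ := hx
    exact ⟨t • q, by rw [map_smul, hq, Em_smul]⟩

lemma φ_derived_two {a : L K n} (ha : a ∈ derivedSeries K (L K n) 2) :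
    φ a = 0 := by
  have h1 : derivedSeries K (L K n) 2 = ⁅derivedSeries K (L K n) 1, derivedSeries K (L K n) 1⁆ := rfl
  rw [h1] at ha
  have ha' : a ∈ Submodule.span K {m | ∃ x ∈ derivedSeries K (L K n) 1, ∃ y ∈ derivedSeries K (L K n) 1, ⁅x, y⁆ = m} := by
    rw [← LieSubmodule.lieIdeal_oper_eq_linear_span']
    exact ha
  clear ha
  induction ha' using Submodule.span_induction with
  | mem m hm =>
    obtain ⟨x, hx, y, hy, rfl⟩ := hm
    obtain ⟨q, hq⟩ := φ_derived_one hx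
    obtain ⟨q', hq'⟩ := φ_derived_one hy
    rw [LieHom.map_lie, hq, hq', Ring.lie_def, Em_mul_Em, Em_mul_Em, sub_zero]
  | zero => exact map_zero _
  | add x y _ _ hx hy => rw [map_add, hx, hy, add_zero]
  | smul t x _ hx => rw [map_smul, hx, smul_zero]

-- ===== Layer 4: leftNorm calculus in F =====

def leftNorm (z : F K n) (l : List (Fin n)) : F K n :=
  l.foldl (fun w j => ⁅w, Fx K n j⁆) z

@[simp] lemma leftNorm_nil (z : F K n) : leftNorm z [] = z := rfl
lemma leftNorm_cons (z : F K n) (j : Fin n) (l : List (Fin n)) :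
    leftNorm z (j :: l) = leftNorm ⁅z, Fx K n j⁆ l := rfl
lemma leftNorm_concat (z : F K n) (j : Fin n) (l : List (Fin n)) :
    leftNorm z (l ++ [j]) = ⁅leftNorm z l, Fx K n j⁆ := by
  simp [leftNorm, List.foldl_append]

lemma leftNorm_zero (l : List (Fin n)) : leftNorm (0 : F K n) l = 0 := by
  induction l with
  | nil => rfl
  | cons j l ih => rw [leftNorm_cons, zero_lie, ih]

lemma leftNorm_add (z w : F K n) (l : List (Fin n)) :
    leftNorm (z + w) l = leftNorm z l + leftNorm w l := by
  induction l generalizing z w with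
  | nil => rfl
  | cons j l ih => rw [leftNorm_cons, add_lie, ih, leftNorm_cons, leftNorm_cons]

lemma leftNorm_neg (z : F K n) (l : List (Fin n)) :
    leftNorm (-z) l = - leftNorm z l := by
  induction l generalizing z with
  | nil => rfl
  | cons j l ih => rw [leftNorm_cons, neg_lie, ih, leftNorm_cons]

lemma leftNorm_sub (z w : F K n) (l : List (Fin n)) :
    leftNorm (z - w) l = leftNorm z l - leftNorm w l := by
  rw [sub_eq_add_neg, leftNorm_add, leftNorm_neg, sub_eq_add_neg]

lemma leftNorm_smul (t : K) (z : F K n) (l : List (Fin n)) :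
    leftNorm (t • z) l = t • leftNorm z l := by
  induction l generalizing z with
  | nil => rfl
  | cons j l ih => rw [leftNorm_cons, smul_lie, ih, leftNorm_cons]

lemma leftNorm_mem_derived {z : F K n} (hz : z ∈ derivedSeries K (F K n) 1)
    (l : List (Fin n)) : leftNorm z l ∈ derivedSeries K (F K n) 1 := by
  induction l generalizing z with
  | nil => exact hz
  | cons j l ih => exact ih (mem_derived_one _ _)

lemma lie_lie_swap {z : F K n} (hz : z ∈ derivedSeries K (F K n) 1) (a b : F K n) :
    ⁅⁅z, a⁆, b⁆ = ⁅⁅z, b⁆, a⁆ := by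
  have h0 : ⁅z, ⁅a, b⁆⁆ = 0 := lie_derived_eq_zero hz (mem_derived_one a b)
  have h1 : ⁅⁅z, a⁆, b⁆ = ⁅z, ⁅a, b⁆⁆ - ⁅a, ⁅z, b⁆⁆ := lie_lie z a b
  rw [h1, h0, zero_sub, ← lie_skew, neg_neg]

lemma leftNorm_perm {l l' : List (Fin n)} (h : l.Perm l') :
    ∀ z ∈ derivedSeries K (F K n) 1, leftNorm z l = leftNorm z l' := by
  induction h with
  | nil => intro z _; rfl
  | cons x h ih =>
    intro z hz
    rw [leftNorm_cons, leftNorm_cons, ih _ (mem_derived_one _ _)]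
  | swap x y l =>
    intro z hz
    rw [leftNorm_cons, leftNorm_cons, leftNorm_cons, leftNorm_cons, lie_lie_swap hz]
  | trans h₁ h₂ ih₁ ih₂ =>
    intro z hz
    rw [ih₁ _ hz, ih₂ _ hz]

def gElt (i j : Fin n) (l : List (Fin n)) : F K n := leftNorm ⁅Fx K n i, Fx K n j⁆ l

lemma gElt_mem_derived (i j : Fin n) (l : List (Fin n)) :
    gElt i j l ∈ derivedSeries K (F K n) 1 :=
  leftNorm_mem_derived (mem_derived_one _ _) l

def GoodSet : Set (F K n) :=
  {z | ∃ i j : Fin n, ∃ l : List (Fin n), j < i ∧ (∀ k ∈ l, j ≤ k) ∧ z = gElt i j l}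

lemma jacobi_step (a b c : F K n) :
    ⁅⁅a, b⁆, c⁆ = ⁅⁅a, c⁆, b⁆ - ⁅⁅b, c⁆, a⁆ := by
  rw [lie_lie a b c, ← lie_skew b ⁅a,c⁆, ← lie_skew a ⁅b,c⁆]
  abel

lemma gElt_mem_span_core {i j : Fin n} (hij : j < i) (l : List (Fin n)) :
    gElt i j l ∈ Submodule.span K (GoodSet (K := K) (n := n)) := by
  by_cases hgood : ∀ k ∈ l, j ≤ k
  · exact Submodule.subset_span ⟨i, j, l, hij, hgood, rfl⟩
  · push_neg at hgood
    obtain ⟨k₀, hk₀l, hk₀⟩ := hgood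
    have hne : l.toFinset.Nonempty := ⟨k₀, List.mem_toFinset.2 hk₀l⟩
    set cm := l.toFinset.min' hne with hcm
    have hcl : cm ∈ l := List.mem_toFinset.1 (l.toFinset.min'_mem hne)
    have hcle : ∀ k ∈ l, cm ≤ k := fun k hk => l.toFinset.min'_le k (List.mem_toFinset.2 hk)
    have hcj : cm < j := lt_of_le_of_lt (hcle k₀ hk₀l) hk₀
    have hperm : l.Perm (cm :: l.erase cm) := List.perm_cons_erase hcl
    have h1 : gElt i j l = leftNorm ⁅⁅Fx K n i, Fx K n j⁆, Fx K n cm⁆ (l.erase cm) := by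
      rw [gElt, leftNorm_perm hperm _ (mem_derived_one _ _), leftNorm_cons]
    have h2 : gElt (K := K) i j l = gElt i cm (j :: l.erase cm) - gElt j cm (i :: l.erase cm) := by
      rw [h1, jacobi_step, leftNorm_sub]
      rfl
    rw [h2]
    have herase : ∀ k ∈ l.erase cm, cm ≤ k := fun k hk => hcle k (List.mem_of_mem_erase hk)
    refine sub_mem (Submodule.subset_span ⟨i, cm, _, lt_trans hcj hij, ?_, rfl⟩)
      (Submodule.subset_span ⟨j, cm, _, hcj, ?_, rfl⟩)
    · intro k hk
      rcases List.mem_cons.1 hk with rfl | hk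
      · exact le_of_lt hcj
      · exact herase k hk
    · intro k hk
      rcases List.mem_cons.1 hk with rfl | hk
      · exact le_of_lt (lt_trans hcj hij)
      · exact herase k hk

lemma gElt_mem_span (i j : Fin n) (l : List (Fin n)) :
    gElt i j l ∈ Submodule.span K (GoodSet (K := K) (n := n)) := by
  rcases lt_trichotomy j i with h | h | h
  · exact gElt_mem_span_core h l
  · subst h
    have : gElt (K := K) j j l = 0 := by rw [gElt, lie_self, leftNorm_zero]
    rw [this]; exact Submodule.zero_mem _
  · have : gElt (K := K) i j l = - gElt j i l := by
      rw [gElt, gElt, ← lie_skew, leftNorm_neg]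
    rw [this]
    exact neg_mem (gElt_mem_span_core h l)

-- ===== Layer 5: F' ≤ span GoodSet =====

def QSet : Set (F K n) :=
  Set.range (Fx K n) ∪ {z | ∃ i j : Fin n, ∃ l : List (Fin n), z = gElt i j l}

lemma lie_QSet_mem {x y : F K n} (hx : x ∈ QSet (K := K) (n := n)) (hy : y ∈ QSet (K := K) (n := n)) :
    ⁅x, y⁆ ∈ Submodule.span K (QSet (K := K) (n := n)) ∧
      ⁅x, y⁆ ∈ Submodule.span K (GoodSet (K := K) (n := n)) := by
  have spanG := fun (i j : Fin n) (l : List (Fin n)) => gElt_mem_span (K := K) i j l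
  rcases hx with ⟨i, rfl⟩ | ⟨i, j, l, rfl⟩ <;> rcases hy with ⟨i', rfl⟩ | ⟨i', j', l', rfl⟩
  · have : ⁅Fx K n i, Fx K n i'⁆ = gElt i i' [] := rfl
    rw [this]
    exact ⟨Submodule.subset_span (Or.inr ⟨i, i', [], rfl⟩), spanG i i' []⟩
  · have : ⁅Fx K n i, gElt (K := K) i' j' l'⁆ = - gElt i' j' (l' ++ [i]) := by
      rw [← lie_skew, gElt, gElt, leftNorm_concat]
    rw [this]
    exact ⟨neg_mem (Submodule.subset_span (Or.inr ⟨i', j', l' ++ [i], rfl⟩)),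
      neg_mem (spanG i' j' (l' ++ [i]))⟩
  · have : ⁅gElt (K := K) i j l, Fx K n i'⁆ = gElt i j (l ++ [i']) := by
      rw [gElt, gElt, leftNorm_concat]
    rw [this]
    exact ⟨Submodule.subset_span (Or.inr ⟨i, j, l ++ [i'], rfl⟩), spanG i j (l ++ [i'])⟩
  · have : ⁅gElt (K := K) i j l, gElt i' j' l'⁆ = 0 :=
      lie_derived_eq_zero (gElt_mem_derived _ _ _) (gElt_mem_derived _ _ _)
    rw [this]
    exact ⟨Submodule.zero_mem _, Submodule.zero_mem _⟩

lemma lie_span_span {S : Set (F K n)} {T : Submodule K (F K n)}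
    (h : ∀ x ∈ S, ∀ y ∈ S, ⁅x, y⁆ ∈ T) :
    ∀ x ∈ Submodule.span K S, ∀ y ∈ Submodule.span K S, ⁅x, y⁆ ∈ T := by
  intro x hx
  induction hx using Submodule.span_induction with
  | mem a ha =>
    intro y hy
    induction hy using Submodule.span_induction with
    | mem b hb => exact h a ha b hb
    | zero => rw [lie_zero]; exact T.zero_mem
    | add b c _ _ hb hc => rw [lie_add]; exact T.add_mem hb hc
    | smul t b _ hb => rw [lie_smul]; exact T.smul_mem t hb
  | zero => intro y hy; rw [zero_lie]; exact T.zero_mem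
  | add a b _ _ ha hb => intro y hy; rw [add_lie]; exact T.add_mem (ha y hy) (hb y hy)
  | smul t a _ ha => intro y hy; rw [smul_lie]; exact T.smul_mem t (ha y hy)

lemma Qspan_top : Submodule.span K (QSet (K := K) (n := n)) = ⊤ := by
  set Qsub := Submodule.span K (QSet (K := K) (n := n)) with hQ
  have hlie : ∀ x ∈ Qsub, ∀ y ∈ Qsub, ⁅x, y⁆ ∈ Qsub :=
    lie_span_span (fun x hx y hy => (lie_QSet_mem hx hy).1)
  let QS : LieSubalgebra K (F K n) := { Qsub with lie_mem' := fun ha hb => hlie _ ha _ hb }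
  have hFx : ∀ i, Fx K n i ∈ QS := fun i => Submodule.subset_span (Or.inl ⟨i, rfl⟩)
  let h : L K n →ₗ⁅K⁆ QS := FreeLieAlgebra.lift K (fun i => ⟨Fx K n i, hFx i⟩)
  have hcomp : (QS.incl).comp h = Fmk' := by
    apply FreeLieAlgebra.hom_ext
    intro x
    simp only [LieHom.comp_apply, h, FreeLieAlgebra.lift_of_apply]
    rfl
  rw [eq_top_iff]
  intro p _
  obtain ⟨a, rfl⟩ := Fmk_surj (n := n) p
  have hca := LieHom.congr_fun hcomp a
  rw [Fmk'_eq] at hca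
  rw [← hca]
  exact (h a).2

lemma derived_le_span_good {z : F K n} (hz : z ∈ derivedSeries K (F K n) 1) :
    z ∈ Submodule.span K (GoodSet (K := K) (n := n)) := by
  have h1 : derivedSeries K (F K n) 1 = ⁅(⊤ : LieIdeal K (F K n)), ⊤⁆ := rfl
  rw [h1] at hz
  have hz' : z ∈ Submodule.span K {m | ∃ x ∈ (⊤ : LieIdeal K (F K n)), ∃ y ∈ (⊤ : LieIdeal K (F K n)), ⁅x, y⁆ = m} := by
    rw [← LieSubmodule.lieIdeal_oper_eq_linear_span']
    exact hz
  clear hz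
  induction hz' using Submodule.span_induction with
  | mem m hm =>
    obtain ⟨x, -, y, -, rfl⟩ := hm
    have hx : x ∈ Submodule.span K (QSet (K := K) (n := n)) := by rw [Qspan_top]; trivial
    have hy : y ∈ Submodule.span K (QSet (K := K) (n := n)) := by rw [Qspan_top]; trivial
    exact lie_span_span (fun a ha b hb => (lie_QSet_mem ha hb).2) x hx y hy
  | zero => exact Submodule.zero_mem _
  | add x y _ _ hx hy => exact Submodule.add_mem _ hx hy
  | smul t x _ hx => exact Submodule.smul_mem _ t hx

-- ===== Layer 6: φbar and linear independence =====

def φbar : F K n →ₗ[K] M' K n :=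
  Submodule.liftQ (derivedSeries K (L K n) 2).toSubmodule φ.toLinearMap
    (fun x hx => by
      simp only [LinearMap.mem_ker, LieHom.coe_toLinearMap]
      exact φ_derived_two hx)

lemma φbar_mk (a : L K n) : φbar (Fmk K n a) = φ a := rfl

def leftNormL (z : L K n) (l : List (Fin n)) : L K n :=
  l.foldl (fun w j => ⁅w, X K n j⁆) z

lemma Fmk_leftNormL (z : L K n) (l : List (Fin n)) :
    Fmk K n (leftNormL z l) = leftNorm (Fmk K n z) l := by
  induction l generalizing z with
  | nil => rfl
  | cons j l ih =>
    rw [leftNormL, List.foldl_cons, ← leftNormL, ih, leftNorm_cons, Fmk_bracket]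
    rfl

lemma gElt_eq_mk (i j : Fin n) (l : List (Fin n)) :
    gElt (K := K) i j l = Fmk K n (leftNormL ⁅X K n i, X K n j⁆ l) := by
  rw [Fmk_leftNormL, Fmk_bracket]
  rfl

lemma φ_leftNormL (z : L K n) (l : List (Fin n)) :
    φ (leftNormL z l) = l.foldl (fun A k => ⁅A, ξ k⁆) (φ z) := by
  induction l generalizing z with
  | nil => rfl
  | cons j l ih =>
    rw [leftNormL, List.foldl_cons, ← leftNormL, ih, List.foldl_cons]
    congr 1
    rw [LieHom.map_lie, φ_X]

lemma foldl_Em (l : List (Fin n)) : ∀ q : Q' K n,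
    l.foldl (fun A k => ⁅A, ξ k⁆) (Em q) = ((-1 : K)^l.length) • Em ((l.map Tv).prod * q) := by
  induction l with
  | nil => intro q; simp [one_mul]
  | cons k l ih =>
    intro q
    rw [List.foldl_cons, lie_Em_xi, ← Em_neg, ih]
    have harg : (l.map Tv).prod * -(Tv k * q) = -(((k :: l).map Tv).prod * q) := by
      rw [List.map_cons, List.prod_cons]; ring
    rw [harg, Em_neg, smul_neg, List.length_cons, ← neg_smul, pow_succ, mul_neg_one]

lemma φbar_gElt (i j : Fin n) (l : List (Fin n)) :
    φbar (gElt (K := K) i j l) =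
      ((-1 : K)^l.length) • Em ((l.map Tv).prod * (Tv i * Yv j - Tv j * Yv i)) := by
  rw [gElt_eq_mk, φbar_mk, φ_leftNormL, LieHom.map_lie, φ_X, φ_X, lie_xi_xi, foldl_Em]

-- exponents
def expo (m : Multiset (Fin n)) (r : Fin n) : (Fin n ⊕ Fin n) →₀ ℕ :=
  Multiset.toFinsupp (m.map Sum.inl) + Finsupp.single (Sum.inr r) 1

lemma expo_inj {m m' : Multiset (Fin n)} {r r' : Fin n} (h : expo m r = expo m' r') :
    m = m' ∧ r = r' := by
  have hcount : ∀ (s : Multiset (Fin n)) (x : Fin n),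
      (Multiset.toFinsupp (s.map Sum.inl)) (Sum.inr x : Fin n ⊕ Fin n) = 0 := by
    intro s x
    rw [Multiset.toFinsupp_apply, Multiset.count_eq_zero]
    intro hmem
    obtain ⟨y, -, hy⟩ := Multiset.mem_map.1 hmem
    exact Sum.inl_ne_inr hy
  have hr : r = r' := by
    have h1 := DFunLike.congr_fun h (Sum.inr r : Fin n ⊕ Fin n)
    simp only [expo, Finsupp.add_apply, hcount, zero_add, Finsupp.single_apply] at h1
    by_contra hne
    rw [if_pos trivial, if_neg (by simp [Ne.symm hne])] at h1
    exact one_ne_zero h1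
  subst hr
  refine ⟨?_, rfl⟩
  unfold expo at h
  have h2 := add_right_cancel h
  have h3 : m.map Sum.inl = m'.map Sum.inl := Multiset.toFinsupp.injective h2
  exact Multiset.map_injective Sum.inl_injective h3

lemma tmon (m : Multiset (Fin n)) :
    (m.map (Tv (K := K))).prod = MvPolynomial.monomial (Multiset.toFinsupp (m.map Sum.inl)) 1 := by
  induction m using Multiset.induction_on with
  | empty => simp [MvPolynomial.monomial_zero']
  | cons a m ih =>
    rw [Multiset.map_cons, Multiset.prod_cons, ih, Multiset.map_cons,
      show (Sum.inl a ::ₘ m.map Sum.inl) = ({Sum.inl a} : Multiset _) + m.map Sum.inl by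
        rw [Multiset.singleton_add],
      Multiset.toFinsupp_add, Multiset.toFinsupp_singleton]
    rw [show (Tv a : Q' K n) = MvPolynomial.monomial (Finsupp.single (Sum.inl a) 1) 1 from rfl]
    rw [MvPolynomial.monomial_mul, one_mul]

lemma tprod_formula (l : List (Fin n)) (i j : Fin n) :
    ((l.map (Tv (K := K))).prod * (Tv i * Yv j)) =
      MvPolynomial.monomial (expo (i ::ₘ (↑l : Multiset (Fin n))) j) 1 := by
  have h1 : ((l.map (Tv (K := K))).prod) = ((↑l : Multiset (Fin n)).map Tv).prod := by
    rw [Multiset.map_coe, Multiset.prod_coe]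
  rw [h1, tmon]
  rw [show (Tv i : Q' K n) = MvPolynomial.monomial (Finsupp.single (Sum.inl i) 1) 1 from rfl]
  rw [show (Yv j : Q' K n) = MvPolynomial.monomial (Finsupp.single (Sum.inr j) 1) 1 from rfl]
  rw [MvPolynomial.monomial_mul, MvPolynomial.monomial_mul, one_mul, one_mul]
  congr 1
  rw [expo, Multiset.map_cons,
    show (Sum.inl i ::ₘ (↑l : Multiset (Fin n)).map Sum.inl) =
      ({Sum.inl i} : Multiset _) + (↑l : Multiset (Fin n)).map Sum.inl by
        rw [Multiset.singleton_add],
    Multiset.toFinsupp_add, Multiset.toFinsupp_singleton]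
  abel

def entry01 : M' K n →ₗ[K] Q' K n where
  toFun := fun A => A 0 1
  map_add' := fun A B => rfl
  map_smul' := fun t A => rfl

lemma entry01_Em (q : Q' K n) : entry01 (Em q) = q := by
  show Em q 0 1 = q
  simp [Em_apply]

lemma coeff_gElt (i j : Fin n) (l : List (Fin n)) (μ : (Fin n ⊕ Fin n) →₀ ℕ) :
    MvPolynomial.coeff μ (entry01 (φbar (gElt (K := K) i j l))) =
      ((-1 : K)^l.length) *
        ((if expo (i ::ₘ (↑l : Multiset (Fin n))) j = μ then 1 else 0) -
         (if expo (j ::ₘ (↑l : Multiset (Fin n))) i = μ then 1 else 0)) := by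
  rw [φbar_gElt, map_smul, MvPolynomial.coeff_smul, smul_eq_mul]
  congr 1
  rw [entry01_Em]
  have hexp : ((l.map (Tv (K := K))).prod * (Tv i * Yv j - Tv j * Yv i)) =
      MvPolynomial.monomial (expo (i ::ₘ (↑l : Multiset (Fin n))) j) 1 -
      MvPolynomial.monomial (expo (j ::ₘ (↑l : Multiset (Fin n))) i) 1 := by
    rw [← tprod_formula, ← tprod_formula]; ring
  rw [hexp, MvPolynomial.coeff_sub, MvPolynomial.coeff_monomial, MvPolynomial.coeff_monomial]

lemma mem_cons_ge {j : Fin n} {i : Fin n} {l : List (Fin n)} (hij : j < i)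
    (hgood : ∀ k ∈ l, j ≤ k) {x : Fin n} (hx : x ∈ (i ::ₘ (↑l : Multiset (Fin n)))) :
    j ≤ x := by
  rcases Multiset.mem_cons.1 hx with rfl | hx
  · exact le_of_lt hij
  · exact hgood x (by simpa using hx)

lemma gElt_perm {i j : Fin n} {l l' : List (Fin n)} (h : l.Perm l') :
    gElt (K := K) i j l = gElt i j l' := by
  rw [gElt, gElt, leftNorm_perm h _ (mem_derived_one _ _)]

lemma span_good_inj {x : F K n} (hx : x ∈ Submodule.span K (GoodSet (K := K) (n := n)))
    (h0 : φbar x = 0) : x = 0 := by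
  obtain ⟨c, hsupp, hsum⟩ := Submodule.mem_span_set.1 hx
  have hzero : ∀ z₀ ∈ c.support, c z₀ = 0 := by
    intro z₀ hz₀
    obtain ⟨i₀, j₀, l₀, hij₀, hgood₀, hz₀eq⟩ := hsupp hz₀
    set μ₀ := expo (j₀ ::ₘ (↑l₀ : Multiset (Fin n))) i₀ with hμ₀
    set Λ : F K n →ₗ[K] K :=
      (MvPolynomial.lcoeff K μ₀).comp ((entry01 (K := K) (n := n)).comp φbar) with hΛ
    have hΛg : ∀ (i j : Fin n) (l : List (Fin n)), Λ (gElt (K := K) i j l) =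
        ((-1 : K)^l.length) *
        ((if expo (i ::ₘ (↑l : Multiset (Fin n))) j = μ₀ then 1 else 0) -
         (if expo (j ::ₘ (↑l : Multiset (Fin n))) i = μ₀ then 1 else 0)) :=
      fun i j l => coeff_gElt i j l μ₀
    have hΛgood : ∀ z ∈ GoodSet (K := K) (n := n), z ≠ z₀ → Λ z = 0 := by
      intro z hz hne
      obtain ⟨i, j, l, hij, hgood, rfl⟩ := hz
      rw [hΛg]
      have h1 : expo (i ::ₘ (↑l : Multiset (Fin n))) j ≠ μ₀ := by
        intro habs
        obtain ⟨hm, hr⟩ := expo_inj habs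
        subst hr
        have hle : j ≤ j₀ := by
          refine mem_cons_ge hij hgood ?_
          rw [hm]; exact Multiset.mem_cons_self _ _
        exact absurd hij₀ (not_lt.2 hle)
      have h2 : expo (j ::ₘ (↑l : Multiset (Fin n))) i ≠ μ₀ := by
        intro habs
        obtain ⟨hm, hr⟩ := expo_inj habs
        subst hr
        have hmem : ∀ x ∈ (j ::ₘ (↑l : Multiset (Fin n))), j ≤ x := by
          intro x hxm
          rcases Multiset.mem_cons.1 hxm with rfl | hxm
          · exact le_refl _
          · exact hgood x (by simpa using hxm)
        have hmem₀ : ∀ x ∈ (j₀ ::ₘ (↑l₀ : Multiset (Fin n))), j₀ ≤ x := by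
          intro x hxm
          rcases Multiset.mem_cons.1 hxm with rfl | hxm
          · exact le_refl _
          · exact hgood₀ x (by simpa using hxm)
        have hj1 : j ≤ j₀ := hmem j₀ (by rw [hm]; exact Multiset.mem_cons_self _ _)
        have hj2 : j₀ ≤ j := hmem₀ j (by rw [← hm]; exact Multiset.mem_cons_self _ _)
        have hjj : j = j₀ := le_antisymm hj1 hj2
        subst hjj
        have hll : (↑l : Multiset (Fin n)) = (↑l₀ : Multiset (Fin n)) := by
          have := hm
          rwa [Multiset.cons_inj_right] at this
        have hperm : l.Perm l₀ := Multiset.coe_eq_coe.1 hll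
        exact hne (by rw [hz₀eq, gElt_perm hperm])
      rw [if_neg h1, if_neg h2, sub_zero, mul_zero]
    have hΛz₀ : Λ z₀ = -((-1 : K)^l₀.length) := by
      rw [hz₀eq, hΛg]
      have h1 : expo (i₀ ::ₘ (↑l₀ : Multiset (Fin n))) j₀ ≠ μ₀ := by
        intro habs
        obtain ⟨-, hr⟩ := expo_inj habs
        exact absurd hij₀ (by rw [hr]; exact lt_irrefl _)
      rw [if_neg h1, if_pos rfl, zero_sub, mul_neg, mul_one]
    have hΛx : Λ x = 0 := by
      rw [hΛ]
      simp only [LinearMap.comp_apply, h0]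
      simp [entry01]
    have hsum2 : Λ x = c.sum (fun z k => k • Λ z) := by
      rw [← hsum, map_finsuppSum]
      exact Finsupp.sum_congr (fun z _ => by rw [map_smul])
    rw [Finsupp.sum, Finset.sum_eq_single_of_mem z₀ hz₀
      (fun b hb hbne => by rw [hΛgood b (hsupp hb) hbne, smul_zero])] at hsum2
    rw [hΛx, hΛz₀, smul_eq_mul] at hsum2
    have hne : (-((-1 : K)^l₀.length)) ≠ 0 := by
      simp
    field_simp at hsum2
    simpa using hsum2.symm
  have hc : c = 0 := by
    ext z
    by_cases h : z ∈ c.support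
    · exact hzero z h
    · exact Finsupp.notMem_support_iff.1 h
  rw [← hsum, hc, Finsupp.sum_zero_index]

lemma derived_inj {z : F K n} (hz : z ∈ derivedSeries K (F K n) 1)
    (h0 : φbar z = 0) : z = 0 :=
  span_good_inj (derived_le_span_good hz) h0

-- ===== Layer 7: final assembly =====

lemma Fmk_add (a b : L K n) : Fmk K n (a + b) = Fmk K n a + Fmk K n b := rfl

lemma Fmk_sum (f : Fin n → L K n) : Fmk K n (∑ i, f i) = ∑ i, Fmk K n (f i) := by
  have h := map_sum (Fmk' (K := K) (n := n)).toLinearMap f Finset.univ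
  exact h

lemma permMap_sum (π : Equiv.Perm (Fin n)) (f : Fin n → L K n) :
    permMap K n π (∑ i, f i) = ∑ i, permMap K n π (f i) := by
  have h := map_sum (permMap K n π).toLinearMap f Finset.univ
  exact h

def wsumL : L K n := ∑ i, X K n i
def wsum : F K n := ∑ i, Fx K n i

lemma Fmk_wsumL : Fmk K n (wsumL (K := K) (n := n)) = wsum := by
  rw [wsumL, wsum, Fmk_sum]
  rfl

lemma permMap_wsumL (π : Equiv.Perm (Fin n)) :
    permMap K n π (wsumL (K := K) (n := n)) = wsumL := by
  rw [wsumL, permMap_sum]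
  have h1 : ∀ i, permMap K n π (X K n i) = X K n (π i) := by
    intro i
    simp [permMap, X, FreeLieAlgebra.lift_of_apply]
  simp only [h1]
  exact Equiv.sum_comp π (X K n)

lemma wsum_symm : FIsSymm K n (wsum (K := K) (n := n)) := by
  rw [← Fmk_wsumL]
  exact fIsSymm_of_lift (fun π => by rw [permMap_wsumL])

lemma sum_Tv_ne_zero (hn : 2 ≤ n) : (∑ i, Tv i : Q' K n) ≠ 0 := by
  intro habs
  classical
  have i₀ : Fin n := ⟨0, by omega⟩
  have h1 := congrArg (MvPolynomial.coeff (Finsupp.single (Sum.inl i₀ : Fin n ⊕ Fin n) 1)) habs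
  rw [MvPolynomial.coeff_sum] at h1
  simp only [Tv, MvPolynomial.coeff_X', MvPolynomial.coeff_zero] at h1
  rw [Finset.sum_eq_single i₀
    (fun b _ hb => if_neg (fun hc => hb (Sum.inl.inj (Finsupp.single_left_injective one_ne_zero hc))))
    (fun h => absurd (Finset.mem_univ i₀) h), if_pos rfl] at h1
  exact one_ne_zero h1

lemma cancel_w (hn : 2 ≤ n) {z : F K n} (hz : z ∈ derivedSeries K (F K n) 1)
    (h : ⁅wsum (K := K) (n := n), z⁆ = 0) : z = 0 := by
  obtain ⟨cz, hcz, rfl⟩ := exists_lift_derived hz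
  obtain ⟨q, hq⟩ := φ_derived_one hcz
  have hbr : Fmk K n ⁅wsumL (K := K) (n := n), cz⁆ = 0 := by
    rw [Fmk_bracket, Fmk_wsumL, h]
  rw [Fmk_eq_zero] at hbr
  have hφ : φ ⁅wsumL (K := K) (n := n), cz⁆ = 0 := φ_derived_two hbr
  rw [LieHom.map_lie, hq] at hφ
  have hφw : φ (wsumL (K := K) (n := n)) = ∑ i, ξ i := by
    have h := map_sum (φ (K := K) (n := n)).toLinearMap (X K n) Finset.univ
    rw [wsumL]
    refine h.trans ?_
    exact Finset.sum_congr rfl (fun i _ => φ_X i)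
  rw [hφw] at hφ
  have hmem : (∑ i, ξ i : M' K n) ∈ (WS : LieSubalgebra K (M' K n)) :=
    Submodule.sum_mem _ (fun i _ => xi_mem_WS i)
  rw [lie_WS hmem (Em_mem_WS q)] at hφ
  have hEq : ((∑ i, ξ i : M' K n) 0 0 * (Em q 0 1) - Em q 0 0 * (∑ i, ξ i : M' K n) 0 1)
      = (∑ i, Tv i) * q := by
    rw [Matrix.sum_apply, Matrix.sum_apply]
    simp only [Em_apply, xi_apply]
    simp
  rw [hEq] at hφ
  have h0 : ((∑ i, Tv i : Q' K n)) * q = 0 := by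
    apply Em_inj
    rw [hφ, Em_zero]
  have hq0 : q = 0 := by
    rcases mul_eq_zero.1 h0 with h | h
    · exact absurd h (sum_Tv_ne_zero hn)
    · exact h
  apply derived_inj hz
  rw [φbar_mk, hq, hq0, Em_zero]

theorem inner_aut_preserves_symm_iff' (hn : 2 ≤ n)
    (u : F K n) (hu : u ∈ derivedSeries K (F K n) 1) :
    (∀ v : F K n, FIsSymm K n v → FIsSymm K n (v + ⁅v, u⁆)) ↔ FIsSymm K n u := by
  constructor
  · intro H
    have hw := H _ (wsum_symm (K := K) (n := n))
    obtain ⟨cu, hcu, hcumk⟩ := exists_lift_derived hu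
    intro π b hb
    have hlift : Fmk K n (wsumL (K := K) (n := n) + ⁅wsumL (K := K) (n := n), cu⁆)
        = wsum + ⁅wsum (K := K) (n := n), u⁆ := by
      rw [Fmk_add, Fmk_bracket, Fmk_wsumL, hcumk]
    have hsym := hw π _ hlift
    rw [map_add, Fmk_add, permMap_wsumL, Fmk_wsumL, LieHom.map_lie, Fmk_bracket,
      permMap_wsumL, Fmk_wsumL] at hsym
    have hbr : ⁅wsum (K := K) (n := n), Fmk K n (permMap K n π cu) - u⁆ = 0 := by
      have := add_left_cancel hsym
      rw [lie_sub, this, sub_self]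
    have hmemz : Fmk K n (permMap K n π cu) - u ∈ derivedSeries K (F K n) 1 := by
      apply sub_mem _ hu
      have hmem : permMap K n π cu ∈ derivedSeries K (L K n) 1 := permMap_mem_derived π hcu
      rw [← LieIdeal.derivedSeries_map_eq 1 (f := Fmk') Fmk_surj]
      exact LieIdeal.mem_map hmem
    have hz0 := cancel_w hn hmemz hbr
    have hub : Fmk K n (permMap K n π cu) = u := sub_eq_zero.1 hz0
    calc Fmk K n (permMap K n π b) = Fmk K n (permMap K n π cu) :=
          Fmk_congr_perm π (by rw [hb, hcumk])
      _ = u := hub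
  · intro hu_sym v hv
    obtain ⟨a, ha⟩ := Fmk_surj (n := n) v
    obtain ⟨b, hbmk⟩ := Fmk_surj (n := n) u
    have hlift : Fmk K n (a + ⁅a, b⁆) = v + ⁅v, u⁆ := by
      rw [Fmk_add, Fmk_bracket, ha, hbmk]
    rw [← hlift]
    apply fIsSymm_of_lift
    intro π
    rw [hlift, map_add, Fmk_add, LieHom.map_lie, Fmk_bracket]
    rw [hv π a ha, hu_sym π b hbmk]


variable (K n)

/-- For `u` in the commutator ideal `F_n'` of the free metabelian Lie algebra
`F_n`, the inner automorphism `ψ_u : v ↦ v + [v,u]` maps every symmetric element of `F_n` to a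
symmetric element if and only if `u` is itself symmetric, i.e. `u ∈ (F_n')^{S_n}`. -/
theorem inner_aut_preserves_symm_iff {K : Type*} [Field K] [CharZero K] {n : ℕ} (hn : 2 ≤ n)
    (u : F K n) (hu : u ∈ derivedSeries K (F K n) 1) :
    (∀ v : F K n, FIsSymm K n v → FIsSymm K n (v + ⁅v, u⁆)) ↔ FIsSymm K n u :=
  inner_aut_preserves_symm_iff' hn u hu
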